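/- Every hyperoval of PHG(2, ℤ/4ℤ) contains exactly one point from each of the 7 neighbour classes; equivalently, coordinatewise reduction mod 2 maps the 7 points of a hyperoval bijectively onto the 7 points of the quotient plane PG(2,𝔽₂). -/

import Mathlib

/-- A point of a projective Hjelmslev geometry PHG(n-1, R): a free rank-1 submodule
of Rⁿ, i.e. the R-span of a vector having at least one unit coordinate. -/
def IsPoint {R : Type} [CommRing R] {n : ℕ} (P : Submodule R (Fin n → R)) : Prop :=
  ∃ v : Fin n → R, (∃ i, IsUnit (v i)) ∧ P = Submodule.span R {v}

/-- A free rank-k submodule of Rⁿ: a submodule linearly isomorphic to Rᵏ. -/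
def IsFreeRank {R : Type} [CommRing R] {n : ℕ} (k : ℕ) (L : Submodule R (Fin n → R)) : Prop :=
  Nonempty ((Fin k → R) ≃ₗ[R] L)

/-- A line of PHG(2, R): a free rank-2 submodule of R³. -/
abbrev IsLine {R : Type} [CommRing R] (L : Submodule R (Fin 3 → R)) : Prop := IsFreeRank 2 L

/-- A hyperoval of PHG(2, R), |R| = 4: a set of 7 points with at most 2 points on each line. -/
def IsHyperoval {R : Type} [CommRing R] (H : Set (Submodule R (Fin 3 → R))) : Prop :=
  (∀ P ∈ H, IsPoint P) ∧ H.ncard = 7 ∧ ∀ L, IsLine L → {P ∈ H | P ≤ L}.ncard ≤ 2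

abbrev R4 := ZMod 4

/-- Reduction mod 2 on ℤ/4ℤ. -/
def red2 : ZMod 4 →+* ZMod 2 := ZMod.castHom (show (2:ℕ) ∣ 4 by norm_num) (ZMod 2)

instance : RingHomSurjective red2 :=
  ⟨fun y => by
    fin_cases y
    · exact ⟨0, map_zero _⟩
    · exact ⟨1, map_one _⟩⟩

/-- Coordinatewise reduction mod 2, as a semilinear map (Fin 3 → ℤ/4ℤ) → (Fin 3 → 𝔽₂). -/
def redMap : (Fin 3 → ZMod 4) →ₛₗ[red2] (Fin 3 → ZMod 2) where
  toFun v := fun i => red2 (v i)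
  map_add' := by intros; funext i; simp
  map_smul' := by intros; funext i; simp [Pi.smul_apply, smul_eq_mul]

namespace HypAux
open Submodule

abbrev V4 := Fin 3 → R4
abbrev V2 := Fin 3 → ZMod 2

def Indep2 (x y : V2) : Prop := ∀ c d : ZMod 2, c•x + d•y = 0 → c = 0 ∧ d = 0
instance (x y : V2) : Decidable (Indep2 x y) := by unfold Indep2; infer_instance

def halfZ4 : ZMod 4 → ZMod 4 := fun x => if x = 2 then 1 else 0

lemma red_half : ∀ x : ZMod 4, red2 x = 0 → x = 2 * halfZ4 x := by decide

lemma unit_red {x : ZMod 4} (h : IsUnit x) : red2 x = 1 := by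
  obtain ⟨u, rfl⟩ := h
  exact (by decide : ∀ x y : ZMod 4, x * y = 1 → red2 x = 1) _ _ u.mul_inv

lemma unit_of_red {x : ZMod 4} (h : red2 x ≠ 0) : IsUnit x :=
  IsUnit.of_mul_eq_one (a := x) x ((by decide : ∀ x : ZMod 4, red2 x ≠ 0 → x * x = 1) x h)

lemma redMap_apply (v : V4) (j : Fin 3) : redMap v j = red2 (v j) := rfl

lemma redMap_zero_iff {m : V4} : redMap m = 0 ↔ (2:R4) • m = 0 := by
  constructor
  · intro h
    funext j
    have hj : red2 (m j) = 0 := congrFun h j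
    have : (2:R4) * m j = 0 := (by decide : ∀ x : ZMod 4, red2 x = 0 → 2 * x = 0) _ hj
    simpa [Pi.smul_apply, smul_eq_mul] using this
  · intro h
    funext j
    have hj : (2:R4) * m j = 0 := by simpa [Pi.smul_apply, smul_eq_mul] using congrFun h j
    exact (by decide : ∀ x : ZMod 4, 2 * x = 0 → red2 x = 0) _ hj

/-- construction of a line from two vectors with independent reductions -/
noncomputable def pairMap (a b : V4) : (Fin 2 → R4) →ₗ[R4] span R4 {a,b} where
  toFun x := ⟨x 0 • a + x 1 • b, mem_span_pair.mpr ⟨x 0, x 1, rfl⟩⟩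
  map_add' x y := by
    apply Subtype.ext
    funext j
    simp [Pi.add_apply, Pi.smul_apply, smul_eq_mul]
    ring
  map_smul' c x := by
    apply Subtype.ext
    funext j
    simp [Pi.add_apply, Pi.smul_apply, smul_eq_mul]
    ring

lemma redMap_smul (c : R4) (x : V4) : redMap (c • x) = red2 c • redMap x :=
  redMap.map_smulₛₗ c x

lemma isLine_span_pair {a b : V4} (h : Indep2 (redMap a) (redMap b)) :
    IsLine (span R4 {a,b}) := by
  have key : ∀ x : Fin 2 → R4, x 0 • a + x 1 • b = 0 → x = 0 := by
    intro x hx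
    have hred : red2 (x 0) • redMap a + red2 (x 1) • redMap b = 0 := by
      have := congrArg redMap hx
      rw [map_add, redMap_smul, redMap_smul, map_zero] at this
      exact this
    obtain ⟨h0, h1⟩ := h _ _ hred
    have e0 : x 0 = 2 * halfZ4 (x 0) := red_half _ h0
    have e1 : x 1 = 2 * halfZ4 (x 1) := red_half _ h1
    set y0 := halfZ4 (x 0)
    set y1 := halfZ4 (x 1)
    have h2m : (2:R4) • (y0 • a + y1 • b) = 0 := by
      funext j
      have hj := congrFun hx j
      simp only [Pi.add_apply, Pi.smul_apply, smul_eq_mul, Pi.zero_apply] at hj ⊢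
      rw [e0, e1] at hj
      ring_nf at hj ⊢
      linear_combination hj
    have hredm : redMap (y0 • a + y1 • b) = 0 := redMap_zero_iff.mpr h2m
    have hred2 : red2 y0 • redMap a + red2 y1 • redMap b = 0 := by
      have := hredm
      rw [map_add, redMap_smul, redMap_smul] at this
      exact this
    obtain ⟨g0, g1⟩ := h _ _ hred2
    funext m
    fin_cases m
    · show x 0 = 0
      rw [e0]
      exact (by decide : ∀ y : ZMod 4, red2 y = 0 → 2 * y = 0) _ g0
    · show x 1 = 0
      rw [e1]
      exact (by decide : ∀ y : ZMod 4, red2 y = 0 → 2 * y = 0) _ g1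
  refine ⟨LinearEquiv.ofBijective (pairMap a b) ⟨?_, ?_⟩⟩
  · intro x y hxy
    have hval : x 0 • a + x 1 • b = y 0 • a + y 1 • b := congrArg Subtype.val hxy
    have : (x - y) 0 • a + (x - y) 1 • b = 0 := by
      simp only [Pi.sub_apply, sub_smul]
      rw [sub_add_sub_comm, hval, sub_self]
    have := key _ this
    exact sub_eq_zero.mp (by funext m; exact congrFun (by simpa using this) m)
  · rintro ⟨w, hw⟩
    obtain ⟨c, d, hcd⟩ := mem_span_pair.mp hw
    refine ⟨![c, d], ?_⟩
    apply Subtype.ext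
    show (![c,d] 0) • a + (![c,d] 1) • b = w
    simpa using hcd


lemma lift_red (c : ZMod 2) : red2 (if c = 1 then (1:R4) else 0) = c := by
  revert c; decide

lemma exists_gens {L : Submodule R4 V4} (hL : IsLine L) :
    ∃ a b : V4, L = span R4 {a,b} ∧ Indep2 (redMap a) (redMap b) := by
  obtain ⟨g⟩ := hL
  refine ⟨(g ![1,0] : L), (g ![0,1] : L), ?_, ?_⟩
  · apply le_antisymm
    · intro x hx
      set y := g.symm ⟨x, hx⟩ with hy
      have hgy : g y = ⟨x, hx⟩ := g.apply_symm_apply _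
      have hdec : y = y 0 • ![1,0] + y 1 • ![0,1] := by
        funext m
        fin_cases m <;> simp
      have hmap : g (y 0 • ![1,0] + y 1 • ![0,1]) = y 0 • g ![1,0] + y 1 • g ![0,1] := by
        rw [map_add, map_smul, map_smul]
      have : (⟨x, hx⟩ : L) = y 0 • g ![1,0] + y 1 • g ![0,1] := by
        rw [← hmap, ← hdec]
        exact hgy.symm
      refine mem_span_pair.mpr ⟨y 0, y 1, ?_⟩
      have := congrArg Subtype.val this
      simp only [Submodule.coe_add, SetLike.val_smul] at this
      exact this.symm
    · rw [span_le, Set.insert_subset_iff, Set.singleton_subset_iff]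
      exact ⟨(g ![1,0]).2, (g ![0,1]).2⟩
  · intro c d hcd
    set c' : R4 := if c = 1 then 1 else 0 with hc'
    set d' : R4 := if d = 1 then 1 else 0 with hd'
    set w : Fin 2 → R4 := c' • ![1,0] + d' • ![0,1] with hw
    have hval : ((g w : L) : V4) = c' • (g ![1,0] : L) + d' • (g ![0,1] : L) := by
      rw [hw, map_add, map_smul, map_smul]
      simp
    have hredval : redMap ((g w : L) : V4) = 0 := by
      rw [hval, map_add, redMap_smul, redMap_smul, lift_red, lift_red]
      exact hcd
    have h2 : (2:R4) • ((g w : L) : V4) = 0 := redMap_zero_iff.mp hredval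
    have hzero : g ((2:R4) • w) = 0 := by
      apply Subtype.ext
      simp only [map_smul, SetLike.val_smul, ZeroMemClass.coe_zero]
      exact h2
    have hw0 : (2:R4) • w = 0 := g.injective (hzero.trans (map_zero g).symm)
    have hw00 : w 0 = c' := by simp [hw]
    have hw01 : w 1 = d' := by simp [hw]
    have hc0 : (2:R4) * c' = 0 := by
      have h := congrFun hw0 0
      rw [Pi.smul_apply, hw00, smul_eq_mul] at h
      exact h
    have hd0 : (2:R4) * d' = 0 := by
      have h := congrFun hw0 1
      rw [Pi.smul_apply, hw01, smul_eq_mul] at h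
      exact h
    constructor
    · exact (by decide : ∀ c : ZMod 2, (2:R4) * (if c = 1 then 1 else 0) = 0 → c = 0) c hc0
    · exact (by decide : ∀ c : ZMod 2, (2:R4) * (if c = 1 then 1 else 0) = 0 → c = 0) d hd0

lemma span_pair_eq {a b c : V4} {β : R4} (α : R4) (hβ : IsUnit β) (h : c = α•a + β•b) :
    span R4 {a,b} = span R4 {a,c} := by
  obtain ⟨u, hu⟩ := hβ
  have hinv : (↑u⁻¹ : R4) * β = 1 := by rw [← hu]; exact u.inv_mul
  apply le_antisymm <;> rw [span_le, Set.insert_subset_iff, Set.singleton_subset_iff]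
  · refine ⟨subset_span (Set.mem_insert _ _), ?_⟩
    have hb : b = (↑u⁻¹ : R4) • c - ((↑u⁻¹ : R4) * α) • a := by
      rw [h]
      funext j
      simp only [Pi.smul_apply, smul_eq_mul, Pi.add_apply, Pi.sub_apply]
      linear_combination (-(b j)) * hinv
    rw [hb]
    exact sub_mem (smul_mem _ _ (subset_span (Set.mem_insert_of_mem _ rfl)))
      (smul_mem _ _ (subset_span (Set.mem_insert _ _)))
  · refine ⟨subset_span (Set.mem_insert _ _), ?_⟩
    rw [h]
    exact add_mem (smul_mem _ _ (subset_span (Set.mem_insert _ _)))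
      (smul_mem _ _ (subset_span (Set.mem_insert_of_mem _ rfl)))

lemma span_pair_comm (a b : V4) : span R4 {a,b} = span R4 {b,a} := by
  rw [Set.pair_comm]


def vecjk (j k : Fin 3) (p q : R4) : V4 := fun m => if m = j then p else if m = k then q else 0

def pairs6F : Finset (R4 × R4) := {(1,0),(1,1),(1,2),(1,3),(0,1),(2,1)}
def pairs6 : Set (R4 × R4) := ↑pairs6F

lemma norm6 : ∀ p q : ZMod 4, (red2 p ≠ 0 ∨ red2 q ≠ 0) → ∃ u : ZMod 4, u * u = 1 ∧
    ((u*p = 1 ∧ u*q = 0) ∨ (u*p = 1 ∧ u*q = 1) ∨ (u*p = 1 ∧ u*q = 2) ∨ (u*p = 1 ∧ u*q = 3) ∨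
     (u*p = 0 ∧ u*q = 1) ∨ (u*p = 2 ∧ u*q = 1)) := by decide

lemma mem_pairs6 {x y : R4} (h : (x = 1 ∧ y = 0) ∨ (x = 1 ∧ y = 1) ∨ (x = 1 ∧ y = 2) ∨
    (x = 1 ∧ y = 3) ∨ (x = 0 ∧ y = 1) ∨ (x = 2 ∧ y = 1)) : (x, y) ∈ pairs6 := by
  simp only [pairs6, pairs6F, Finset.coe_insert, Set.mem_insert_iff, Finset.coe_singleton,
    Set.mem_singleton_iff, Prod.mk.injEq]
  tauto

lemma sub_comb_ne_zero : ∀ (x y : V2) (A C : ZMod 2), Indep2 x y → x - C • (A • x + y) ≠ 0 := by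
  decide

lemma indep2_symm : ∀ x y : V2, Indep2 x y → Indep2 y x := by decide

lemma classify_line (i j k : Fin 3) (hij : i ≠ j) (hik : i ≠ k) (hjk : j ≠ k)
    (hcov : ∀ m : Fin 3, m = i ∨ m = j ∨ m = k)
    (v : V4) (hv : IsUnit (v i)) {L : Submodule R4 V4} (hL : IsLine L) (hvL : v ∈ L) :
    ∃ pq ∈ pairs6, L = span R4 {v, vecjk j k pq.1 pq.2} := by
  obtain ⟨a, b, hab, hind⟩ := exists_gens hL
  rw [hab] at hvL
  obtain ⟨α, β, heq⟩ := mem_span_pair.mp hvL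
  -- core, applied with the generator whose coefficient is a unit second
  have core : ∀ a b : V4, Indep2 (redMap a) (redMap b) → ∀ α β : R4, red2 β = 1 →
      α • a + β • b = v → ∃ pq ∈ pairs6, span R4 {a,b} = span R4 {v, vecjk j k pq.1 pq.2} := by
    intro a b hind α β hβ heq
    have hβu : IsUnit β := unit_of_red (by rw [hβ]; exact one_ne_zero)
    have e1 : span R4 {a,b} = span R4 {a,v} := span_pair_eq α hβu heq.symm
    have e1' : span R4 {a,v} = span R4 {v,a} := span_pair_comm a v
    obtain ⟨uu, huu⟩ := hv
    have hti : ∃ t : R4, v i * t = 1 := ⟨(↑uu⁻¹ : R4), by rw [← huu]; exact uu.mul_inv⟩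
    obtain ⟨t, ht⟩ := hti
    set γ : R4 := a i * t with hγ
    set a' : V4 := a - γ • v with ha'
    have ha'i : a' i = 0 := by
      simp only [ha', Pi.sub_apply, Pi.smul_apply, smul_eq_mul, hγ]
      linear_combination (-(a i)) * ht
    have e2 : span R4 {v,a} = span R4 {v,a'} :=
      span_pair_eq (-γ) isUnit_one (by
        funext m
        simp only [ha', Pi.sub_apply, Pi.smul_apply, Pi.add_apply, smul_eq_mul,
          neg_mul, one_mul]
        ring)
    have hrv : redMap v = red2 α • redMap a + redMap b := by
      rw [← heq, map_add, redMap_smul, redMap_smul, hβ, one_smul]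
    have hra' : redMap a' ≠ 0 := by
      have : redMap a' = redMap a - red2 γ • (red2 α • redMap a + redMap b) := by
        rw [ha', map_sub, redMap_smul, hrv]
      rw [this]
      exact sub_comb_ne_zero _ _ _ _ hind
    set p : R4 := a' j with hp
    set q : R4 := a' k with hq
    have hpq : red2 p ≠ 0 ∨ red2 q ≠ 0 := by
      by_contra hcon
      push_neg at hcon
      apply hra'
      funext m
      rcases hcov m with rfl | rfl | rfl
      · show red2 (a' m) = 0
        rw [ha'i]; exact map_zero red2
      · exact hcon.1
      · exact hcon.2
    obtain ⟨u, huu1, hdisj⟩ := norm6 p q hpq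
    have hu : IsUnit u := IsUnit.of_mul_eq_one _ huu1
    have e3 : span R4 {v,a'} = span R4 {v, u • a'} :=
      span_pair_eq 0 hu (by rw [zero_smul, zero_add])
    have hvec : u • a' = vecjk j k (u*p) (u*q) := by
      funext m
      rcases hcov m with rfl | rfl | rfl
      · show u * a' m = _
        rw [ha'i, mul_zero]
        simp [vecjk, hij, hik]
      · show u * a' m = _
        simp [vecjk, hp]
      · show u * a' m = _
        simp [vecjk, hq, (Ne.symm hjk)]
    refine ⟨(u*p, u*q), mem_pairs6 (by tauto), ?_⟩
    rw [e1, e1', e2, e3, hvec]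
  have hrvne : redMap v ≠ 0 := by
    intro h
    have := congrFun h i
    rw [redMap_apply, unit_red hv] at this
    exact one_ne_zero this
  have hone : ∀ c : ZMod 2, c ≠ 0 → c = 1 := by decide
  by_cases hcase : red2 β = 0
  · -- then red2 α ≠ 0
    have hαne : red2 α ≠ 0 := by
      intro hα
      apply hrvne
      rw [← heq, map_add, redMap_smul, redMap_smul, hα, hcase, zero_smul, zero_smul, add_zero]
    obtain ⟨pq, hpq, he⟩ := core b a (indep2_symm _ _ hind) β α (hone _ hαne)
      (by rw [add_comm]; exact heq)
    exact ⟨pq, hpq, by rw [hab, span_pair_comm a b]; exact he⟩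
  · obtain ⟨pq, hpq, he⟩ := core a b hind α β (hone _ hcase) heq
    exact ⟨pq, hpq, by rw [hab]; exact he⟩

lemma lines_bound (v : V4) (hv : ∃ i, IsUnit (v i)) :
    {L : Submodule R4 V4 | IsLine L ∧ v ∈ L}.Finite ∧
    {L : Submodule R4 V4 | IsLine L ∧ v ∈ L}.ncard ≤ 6 := by
  obtain ⟨i, hvi⟩ := hv
  have key : ∃ j k : Fin 3, i ≠ j ∧ i ≠ k ∧ j ≠ k ∧ (∀ m : Fin 3, m = i ∨ m = j ∨ m = k) := by
    fin_cases i
    · exact ⟨1, 2, by decide, by decide, by decide, by decide⟩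
    · exact ⟨0, 2, by decide, by decide, by decide, by decide⟩
    · exact ⟨0, 1, by decide, by decide, by decide, by decide⟩
  obtain ⟨j, k, hij, hik, hjk, hcov⟩ := key
  have hsub : {L : Submodule R4 V4 | IsLine L ∧ v ∈ L} ⊆
      (fun pq : R4 × R4 => span R4 {v, vecjk j k pq.1 pq.2}) '' pairs6 := by
    rintro L ⟨hL, hvL⟩
    obtain ⟨pq, hpq, he⟩ := classify_line i j k hij hik hjk hcov v hvi hL hvL
    exact ⟨pq, hpq, he.symm⟩
  have hfin : ((fun pq : R4 × R4 => span R4 {v, vecjk j k pq.1 pq.2}) '' pairs6).Finite :=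
    (Set.toFinite pairs6).image _
  refine ⟨hfin.subset hsub, ?_⟩
  have h1 : {L : Submodule R4 V4 | IsLine L ∧ v ∈ L}.ncard ≤
      ((fun pq : R4 × R4 => span R4 {v, vecjk j k pq.1 pq.2}) '' pairs6).ncard :=
    Set.ncard_le_ncard hsub hfin
  have h2 : ((fun pq : R4 × R4 => span R4 {v, vecjk j k pq.1 pq.2}) '' pairs6).ncard ≤
      pairs6.ncard := Set.ncard_image_le (Set.toFinite pairs6)
  have h3 : pairs6.ncard ≤ 6 := by
    rw [pairs6, Set.ncard_coe_finset]
    decide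
  omega


lemma h4zero : (4:R4) = 0 := by decide

lemma indep2_of_not_mul : ∀ x y : V2, x ≠ 0 → (¬∃ c : ZMod 2, y = c • x) → Indep2 x y := by
  decide

lemma single_exists : ∀ x y : V2, Indep2 x y → ∃ k : Fin 3,
    ¬∃ c d : ZMod 2, (fun m => if m = k then 1 else 0 : V2) = c • x + d • y := by decide

lemma coeff_eq : ∀ (x y : V2) (c d : ZMod 2), Indep2 x y → c • x + d • y = y →
    c = 0 ∧ d = 1 := by decide

/-- If `s` reduces to the same vector as `v` but spans a different submodule, we can write
`s = v + 2z` with `v, z` reduction-independent. -/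
lemma neighbour_data {v s : V4} (hrv : redMap v ≠ 0) (hrs : redMap s = redMap v)
    (hne : span R4 {s} ≠ span R4 {v}) :
    ∃ z : V4, s = v + (2:R4) • z ∧ Indep2 (redMap v) (redMap z) := by
  set z : V4 := fun m => halfZ4 (s m - v m) with hz
  have hsz : s = v + (2:R4) • z := by
    funext m
    have h0 : red2 (s m - v m) = 0 := by
      rw [map_sub]
      have := congrFun hrs m
      rw [redMap_apply, redMap_apply] at this
      rw [this, sub_self]
    have := red_half _ h0
    simp only [Pi.add_apply, Pi.smul_apply, smul_eq_mul, hz]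
    linear_combination this
  refine ⟨z, hsz, ?_⟩
  apply indep2_of_not_mul _ _ hrv
  rintro ⟨c, hc⟩
  apply hne
  set c' : R4 := if c = 1 then 1 else 0 with hc'
  have hred0 : redMap (z - c' • v) = 0 := by
    rw [map_sub, redMap_smul, lift_red, hc, sub_self]
  have h2z : (2:R4) • (z - c' • v) = 0 := redMap_zero_iff.mp hred0
  have hsv : s = (1 + 2*c') • v := by
    funext m
    have hm : (2:R4) * (z m - c' * v m) = 0 := by
      have := congrFun h2z m
      simpa [Pi.smul_apply, smul_eq_mul] using this
    have hsm := congrFun hsz m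
    simp only [Pi.add_apply, Pi.smul_apply, smul_eq_mul] at hsm ⊢
    linear_combination hsm + hm
  have hu : IsUnit (1 + 2*c') := by
    apply IsUnit.of_mul_eq_one (1 + 2*c')
    linear_combination (c' + c'*c') * h4zero
  rw [hsv]
  exact span_singleton_smul_eq hu v

/-- Main lemma: a hyperoval cannot contain two distinct points with the same reduction. -/
lemma no_two_neighbours (H : Set (Submodule R4 V4)) (hH : IsHyperoval H)
    (hfin : H.Finite)
    {P Q : Submodule R4 V4} (hP : P ∈ H) (hQ : Q ∈ H) (hne : P ≠ Q)
    {v w : V4} (hPv : P = span R4 {v}) (hQw : Q = span R4 {w})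
    (hvu : ∃ i, IsUnit (v i)) (hwr : redMap w = redMap v) : False := by
  obtain ⟨i, hvi⟩ := hvu
  have hrv : redMap v ≠ 0 := by
    intro h
    have := congrFun h i
    rw [redMap_apply, unit_red hvi] at this
    exact one_ne_zero this
  -- three points on a line is impossible
  have three : ∀ A B C : Submodule R4 V4, A ∈ H → B ∈ H → C ∈ H → A ≠ B → A ≠ C → B ≠ C →
      ∀ L : Submodule R4 V4, IsLine L → A ≤ L → B ≤ L → C ≤ L → False := by
    intro A B C hA hB hC hAB hAC hBC L hL hAL hBL hCL
    have hsub : ({A, B, C} : Set (Submodule R4 V4)) ⊆ {X ∈ H | X ≤ L} := by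
      rintro X (rfl | rfl | rfl)
      · exact ⟨hA, hAL⟩
      · exact ⟨hB, hBL⟩
      · exact ⟨hC, hCL⟩
    have h3 : ({A, B, C} : Set (Submodule R4 V4)).ncard = 3 := by
      rw [Set.ncard_insert_of_notMem (by simp [hAB, hAC]),
        Set.ncard_insert_of_notMem (by simp [hBC]), Set.ncard_singleton]
    have hle : ({A, B, C} : Set (Submodule R4 V4)).ncard ≤ {X ∈ H | X ≤ L}.ncard :=
      Set.ncard_le_ncard hsub (hfin.subset (Set.sep_subset _ _))
    exact absurd (le_trans (le_of_eq h3.symm) (le_trans hle (hH.2.2 L hL))) (by norm_num)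
  -- decompose Q
  obtain ⟨z, hwz, hzind⟩ := neighbour_data hrv hwr (by rw [← hQw, ← hPv]; exact fun h => hne h.symm)

  -- the two lines through P and Q
  obtain ⟨k, hk⟩ := single_exists _ _ hzind
  set u : V4 := fun m => if m = k then (1:R4) else 0 with hu
  have hredu : redMap u = (fun m => if m = k then 1 else 0 : V2) := by
    funext m
    rw [redMap_apply, hu]
    by_cases h : m = k <;> simp [h]
  set L1 : Submodule R4 V4 := span R4 {v, z} with hL1def
  set L2 : Submodule R4 V4 := span R4 {v, z + (2:R4) • u} with hL2def
  have hredz2 : redMap (z + (2:R4) • u) = redMap z := by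
    rw [map_add, redMap_smul]
    have h20 : red2 (2:R4) = 0 := by decide
    rw [h20, zero_smul, add_zero]
  have hL1 : IsLine L1 := isLine_span_pair hzind
  have hL2 : IsLine L2 := isLine_span_pair (by rw [hredz2]; exact hzind)
  have hvL1 : v ∈ L1 := subset_span (Set.mem_insert _ _)
  have hvL2 : v ∈ L2 := subset_span (Set.mem_insert _ _)
  have h2zL1 : (2:R4) • z ∈ L1 := smul_mem _ _ (subset_span (Set.mem_insert_of_mem _ rfl))
  have h2zL2 : (2:R4) • z ∈ L2 := by
    have he : (2:R4) • z = (2:R4) • (z + (2:R4) • u) := by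
      funext m
      simp only [Pi.smul_apply, Pi.add_apply, smul_eq_mul]
      linear_combination (-(u m)) * h4zero
    rw [he]
    exact smul_mem _ _ (subset_span (Set.mem_insert_of_mem _ rfl))
  have hwL1 : w ∈ L1 := by rw [hwz]; exact add_mem hvL1 h2zL1
  have hwL2 : w ∈ L2 := by rw [hwz]; exact add_mem hvL2 h2zL2
  have hL12 : L1 ≠ L2 := by
    intro h
    have hz2 : z + (2:R4) • u ∈ L1 := by
      rw [h]; exact subset_span (Set.mem_insert_of_mem _ rfl)
    obtain ⟨c, d, hcd⟩ := mem_span_pair.mp hz2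
    have hredcd : red2 c • redMap v + red2 d • redMap z = redMap z := by
      have h2 := congrArg redMap hcd
      rw [map_add, redMap_smul, redMap_smul, hredz2] at h2
      exact h2
    obtain ⟨hc0, hd1⟩ := coeff_eq _ _ _ _ hzind hredcd
    set c2 : R4 := halfZ4 c with hc2
    set d2 : R4 := halfZ4 (d - 1) with hd2
    have hc : c = 2 * c2 := red_half _ hc0
    have hd : d = 1 + 2 * d2 := by
      have h0 : red2 (d - 1) = 0 := by rw [map_sub, hd1, map_one, sub_self]
      have := red_half _ h0
      linear_combination this
    apply hk
    refine ⟨red2 c2, red2 d2, ?_⟩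
    rw [← hredu]
    funext m
    have hm := congrFun hcd m
    simp only [Pi.add_apply, Pi.smul_apply, smul_eq_mul] at hm
    have h2m : (2:R4) * (u m - c2 * v m - d2 * z m) = 0 := by
      linear_combination (-1 : R4) * hm + (v m) * hc + (z m) * hd
    have hr0 : red2 (u m - c2 * v m - d2 * z m) = 0 :=
      (by decide : ∀ a : ZMod 4, 2 * a = 0 → red2 a = 0) _ h2m
    rw [map_sub, map_sub, map_mul, map_mul] at hr0
    simp only [Pi.add_apply, Pi.smul_apply, smul_eq_mul, redMap_apply]
    linear_combination hr0
  -- a line through v and any other hyperoval point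
  have hexL : ∀ T ∈ H \ {P}, ∃ L : Submodule R4 V4, IsLine L ∧ v ∈ L ∧ T ≤ L := by
    intro T hT
    obtain ⟨s, hsu, hTs⟩ := hH.1 T hT.1
    obtain ⟨is, hsi⟩ := hsu
    have hrs : redMap s ≠ 0 := by
      intro h
      have := congrFun h is
      rw [redMap_apply, unit_red hsi] at this
      exact one_ne_zero this
    by_cases hcs : ∃ c : ZMod 2, redMap s = c • redMap v
    · obtain ⟨c, hc⟩ := hcs
      have hcne : c ≠ 0 := by
        intro h; rw [h, zero_smul] at hc; exact hrs hc
      have hc1 : c = 1 := (by decide : ∀ c : ZMod 2, c ≠ 0 → c = 1) _ hcne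
      rw [hc1, one_smul] at hc
      have hTP : span R4 {s} ≠ span R4 {v} := by
        rw [← hTs, ← hPv]
        intro h
        exact (hT.2 : T ∉ {P}) (Set.mem_singleton_iff.mpr h)
      obtain ⟨zT, hszT, hzTind⟩ := neighbour_data hrv hc hTP
      refine ⟨span R4 {v, zT}, isLine_span_pair hzTind, subset_span (Set.mem_insert _ _), ?_⟩
      rw [hTs, span_le, Set.singleton_subset_iff, hszT]
      exact add_mem (subset_span (Set.mem_insert _ _))
        (smul_mem _ _ (subset_span (Set.mem_insert_of_mem _ rfl)))
    · have hind : Indep2 (redMap v) (redMap s) := indep2_of_not_mul _ _ hrv hcs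
      refine ⟨span R4 {v, s}, isLine_span_pair hind, subset_span (Set.mem_insert _ _), ?_⟩
      rw [hTs, span_le, Set.singleton_subset_iff]
      exact subset_span (Set.mem_insert_of_mem _ rfl)
  classical
  set f : Submodule R4 V4 → Submodule R4 V4 :=
    fun T => if h : T ∈ H \ {P} then (hexL T h).choose else ⊥ with hf
  have hfspec : ∀ T (h : T ∈ H \ {P}), IsLine (f T) ∧ v ∈ f T ∧ T ≤ f T := by
    intro T h
    rw [hf]
    simp only [dif_pos h]
    exact (hexL T h).choose_spec
  have hQmem : Q ∈ H \ {P} := ⟨hQ, fun h => hne (Set.mem_singleton_iff.mp h).symm⟩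
  set Lext : Submodule R4 V4 := if f Q = L1 then L2 else L1 with hLext
  have hextprop : IsLine Lext ∧ v ∈ Lext ∧ Q ≤ Lext ∧ Lext ≠ f Q := by
    have hQle1 : Q ≤ L1 := by rw [hQw, span_le, Set.singleton_subset_iff]; exact hwL1
    have hQle2 : Q ≤ L2 := by rw [hQw, span_le, Set.singleton_subset_iff]; exact hwL2
    rw [hLext]
    by_cases h : f Q = L1
    · rw [if_pos h, h]
      exact ⟨hL2, hvL2, hQle2, hL12.symm⟩
    · rw [if_neg h]
      exact ⟨hL1, hvL1, hQle1, fun hh => h hh.symm⟩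
  have hPle : ∀ L : Submodule R4 V4, v ∈ L → P ≤ L := by
    intro L hvL
    rw [hPv, span_le, Set.singleton_subset_iff]; exact hvL
  have hinj : Set.InjOn f (H \ {P}) := by
    intro T hT T' hT' heq
    by_contra hne'
    obtain ⟨hlT, hvT, hTT⟩ := hfspec T hT
    obtain ⟨hlT', hvT', hTT'⟩ := hfspec T' hT'
    exact three P T T' hP hT.1 hT'.1
      (fun h => (hT.2 : T ∉ {P}) (Set.mem_singleton_iff.mpr h.symm))
      (fun h => (hT'.2 : T' ∉ {P}) (Set.mem_singleton_iff.mpr h.symm)) hne' (f T) hlT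
      (hPle _ hvT) hTT (heq ▸ hTT')
  have hnotmem : Lext ∉ f '' (H \ {P}) := by
    rintro ⟨T, hT, hfT⟩
    by_cases hTQ : T = Q
    · rw [hTQ] at hfT
      exact hextprop.2.2.2 hfT.symm
    · obtain ⟨hlT, hvT, hTT⟩ := hfspec T hT
      exact three P Q T hP hQ hT.1 hne
        (fun h => (hT.2 : T ∉ {P}) (Set.mem_singleton_iff.mpr h.symm))
        (fun h => hTQ h.symm) Lext hextprop.1 (hPle _ hextprop.2.1) hextprop.2.2.1
        (hfT ▸ hTT)
  obtain ⟨hLfin, hL6⟩ := lines_bound v ⟨i, hvi⟩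
  have hsub : insert Lext (f '' (H \ {P})) ⊆ {L : Submodule R4 V4 | IsLine L ∧ v ∈ L} := by
    rintro L (rfl | ⟨T, hT, rfl⟩)
    · exact ⟨hextprop.1, hextprop.2.1⟩
    · obtain ⟨h1, h2, _⟩ := hfspec T hT
      exact ⟨h1, h2⟩
  have himgfin : (f '' (H \ {P})).Finite := hfin.diff.image _
  have hcard1 : (f '' (H \ {P})).ncard = 6 := by
    rw [Set.ncard_image_of_injOn hinj, Set.ncard_diff_singleton_of_mem hP, hH.2.1]
  have hcard2 : (insert Lext (f '' (H \ {P}))).ncard = 7 := by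
    rw [Set.ncard_insert_of_notMem hnotmem himgfin, hcard1]
  have hfinal := Set.ncard_le_ncard hsub hLfin
  rw [hcard2] at hfinal
  omega

end HypAux

/-- The neighbour class of a point, viewed as a point of the quotient plane PG(2,𝔽₂):
the 𝔽₂-line of 𝔽₂³ spanned by the coordinatewise reduction mod 2. -/
def redPt (P : Submodule R4 (Fin 3 → R4)) : Submodule (ZMod 2) (Fin 3 → ZMod 2) :=
  Submodule.map redMap P

/-- Three points of PG(2,𝔽₂) (given as subspaces of 𝔽₂³) are collinear iff together
they span a subspace of dimension at most 2. -/
def CollinearF2 (A B C : Submodule (ZMod 2) (Fin 3 → ZMod 2)) : Prop :=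
  Module.finrank (ZMod 2) ↥(A ⊔ B ⊔ C) ≤ 2

/-- A point of the quotient plane PG(2,𝔽₂): an 𝔽₂-line of 𝔽₂³. -/
def IsF2Point (N : Submodule (ZMod 2) (Fin 3 → ZMod 2)) : Prop :=
  ∃ w : Fin 3 → ZMod 2, w ≠ 0 ∧ N = Submodule.span (ZMod 2) {w}


namespace HypAux
open Submodule

lemma redPt_span (v : V4) : redPt (Submodule.span R4 {v}) = span (ZMod 2) {redMap v} := by
  unfold redPt
  rw [Submodule.map_span, Set.image_singleton]

lemma finite_of_hyperoval {H : Set (Submodule R4 V4)} (hH : IsHyperoval H) : H.Finite := by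
  by_contra h
  have h0 := Set.Infinite.ncard h
  rw [hH.2.1] at h0
  exact absurd h0 (by norm_num)

lemma redMap_ne_zero {v : V4} (hv : ∃ i, IsUnit (v i)) : redMap v ≠ 0 := by
  obtain ⟨i, hvi⟩ := hv
  intro h
  have := congrFun h i
  rw [redMap_apply, unit_red hvi] at this
  exact one_ne_zero this

theorem mapsTo (H : Set (Submodule R4 V4)) (hH : IsHyperoval H) :
    Set.MapsTo redPt H {N | IsF2Point N} := by
  intro P hP
  obtain ⟨v, hvu, hPv⟩ := hH.1 P hP
  show IsF2Point (redPt P)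
  rw [hPv, redPt_span]
  exact ⟨redMap v, redMap_ne_zero hvu, rfl⟩

theorem injOn (H : Set (Submodule R4 V4)) (hH : IsHyperoval H) : Set.InjOn redPt H := by
  intro P hP Q hQ heq
  by_contra hne
  obtain ⟨v, hvu, hPv⟩ := hH.1 P hP
  obtain ⟨w, hwu, hQw⟩ := hH.1 Q hQ
  have h1 : span (ZMod 2) {redMap v} = span (ZMod 2) {redMap w} := by
    rw [← redPt_span, ← redPt_span, ← hPv, ← hQw]
    exact heq
  have hw : redMap w ∈ span (ZMod 2) {redMap v} := by
    rw [h1]; exact subset_span rfl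
  obtain ⟨c, hc⟩ := mem_span_singleton.mp hw
  have hcne : c ≠ 0 := by
    intro h
    rw [h, zero_smul] at hc
    exact redMap_ne_zero hwu hc.symm
  have hc1 : c = 1 := (by decide : ∀ c : ZMod 2, c ≠ 0 → c = 1) _ hcne
  rw [hc1, one_smul] at hc
  exact no_two_neighbours H hH (finite_of_hyperoval hH) hP hQ hne hPv hQw hvu hc.symm

theorem surjOn (H : Set (Submodule R4 V4)) (hH : IsHyperoval H) :
    Set.SurjOn redPt H {N | IsF2Point N} := by
  have himg : redPt '' H ⊆ {N | IsF2Point N} := (mapsTo H hH).image_subset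
  have hc1 : (redPt '' H).ncard = 7 := by
    rw [Set.ncard_image_of_injOn (injOn H hH), hH.2.1]
  have htar : {N | IsF2Point N} = (fun w : V2 => span (ZMod 2) {w}) '' {w : V2 | w ≠ 0} := by
    ext N
    constructor
    · rintro ⟨w, hw, rfl⟩
      exact ⟨w, hw, rfl⟩
    · rintro ⟨w, hw, rfl⟩
      exact ⟨w, hw, rfl⟩
  have hinj2 : Set.InjOn (fun w : V2 => span (ZMod 2) {w}) {w : V2 | w ≠ 0} := by
    intro x hx y hy hxy
    have hy2 : y ∈ span (ZMod 2) {x} := by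
      show y ∈ span (ZMod 2) {x}
      rw [show span (ZMod 2) {x} = span (ZMod 2) {y} from hxy]
      exact subset_span rfl
    obtain ⟨c, hc⟩ := mem_span_singleton.mp hy2
    rcases (by decide : ∀ c : ZMod 2, c = 0 ∨ c = 1) c with h | h
    · rw [h, zero_smul] at hc
      exact absurd hc.symm hy
    · rw [h, one_smul] at hc
      exact hc
  have hset : {w : V2 | w ≠ 0} = ↑((Finset.univ : Finset V2).filter (fun w => w ≠ 0)) := by
    ext w
    simp
  have hnz : ({w : V2 | w ≠ 0}).ncard = 7 := by
    rw [hset, Set.ncard_coe_finset]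
    decide
  have hfin7 : {N | IsF2Point N}.Finite := by
    rw [htar]
    exact (Set.toFinite _).image _
  have hc2 : {N | IsF2Point N}.ncard = 7 := by
    rw [htar, Set.ncard_image_of_injOn hinj2, hnz]
  have heq : redPt '' H = {N | IsF2Point N} :=
    Set.eq_of_subset_of_ncard_le himg (by rw [hc1, hc2]) hfin7
  exact heq.symm.subset

end HypAux

/-- Coordinatewise reduction mod 2 maps the 7 points of any hyperoval of
PHG(2, ℤ/4ℤ) bijectively onto the 7 points of the quotient plane PG(2,𝔽₂);
i.e. a hyperoval contains exactly one point from each neighbour class. -/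
theorem hyperoval_bijects_to_quotient_plane :
    ∀ H : Set (Submodule R4 (Fin 3 → R4)), IsHyperoval H →
      Set.BijOn redPt H {N | IsF2Point N} := by
  intro H hH
  exact ⟨HypAux.mapsTo H hH, HypAux.injOn H hH, HypAux.surjOn H hH⟩
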